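/- Let n ≥ 1, p > 2, δ₁, …, δ_n ≥ 0 and ε ∈ (0, 1). Define F_ε : ℝⁿ → ℝ by F_ε(ξ) = ∑_{i=1}^n (1/p)(|ξ_i| − δ_i)₊^p + (ε/p)(1 + |ξ|²)^{p/2}. Then F_ε is twice continuously differentiable on ℝⁿ, and for every ξ, ζ ∈ ℝⁿ the second derivative bilinear form of F_ε at ξ evaluated at (ζ, ζ) equals (p−1)·∑_{i=1}^n (|ξ_i| − δ_i)₊^{p−2}·ζ_i² + ε·(1 + |ξ|²)^{(p−2)/2}·|ζ|² + ε·(p−2)·(1 + |ξ|²)^{(p−4)/2}·⟨ξ, ζ⟩². -/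

import Mathlib

/-- The regularized orthotropic integrand
`F_ε(ξ) = ∑ᵢ (1/p)(|ξᵢ| − δᵢ)₊^p + (ε/p)(1 + |ξ|²)^{p/2}`. -/
noncomputable def Feps (n : ℕ) (p ε : ℝ) (δ : Fin n → ℝ)
    (ξ : EuclideanSpace ℝ (Fin n)) : ℝ :=
  (∑ i, (1 / p) * (max (|ξ i| - δ i) 0) ^ p) + ε / p * (1 + ‖ξ‖ ^ 2) ^ (p / 2)


open Real Filter

/-- Squeeze lemma: if `|f y - f x| ≤ |y - x| ^ q` with `q > 1`, then `f'(x) = 0`. -/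
lemma hasDerivAt_zero_of_abs_le {f : ℝ → ℝ} {x q : ℝ} (hq : 1 < q)
    (hb : ∀ y, |f y - f x| ≤ |y - x| ^ q) : HasDerivAt f 0 x := by
  rw [hasDerivAt_iff_tendsto]
  have key : ∀ y : ℝ, ‖y - x‖⁻¹ * ‖f y - f x - (y - x) • (0:ℝ)‖ ≤ |y - x| ^ (q - 1) := by
    intro y
    rcases eq_or_ne y x with rfl | hyx
    · simp [Real.zero_rpow (by linarith : q - 1 ≠ 0)]
    · have h1 : (0:ℝ) < |y - x| := abs_pos.2 (sub_ne_zero.2 hyx)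
      simp only [smul_zero, sub_zero, Real.norm_eq_abs]
      rw [Real.rpow_sub_one h1.ne', div_eq_mul_inv, mul_comm]
      exact mul_le_mul_of_nonneg_right (hb y) (by positivity)
  have hlim : Tendsto (fun y : ℝ => |y - x| ^ (q - 1)) (nhds x) (nhds 0) := by
    have : ContinuousAt (fun t : ℝ => t ^ (q - 1)) 0 :=
      Real.continuousAt_rpow_const 0 (q - 1) (Or.inr (by linarith))
    have h2 : Tendsto (fun y : ℝ => |y - x|) (nhds x) (nhds 0) := by
      have hc : Continuous (fun y : ℝ => |y - x|) := (continuous_id.sub continuous_const).abs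
      simpa using hc.tendsto x
    have := this.tendsto.comp h2
    simpa [Function.comp_def, Real.zero_rpow (by linarith : q - 1 ≠ 0)] using this
  refine squeeze_zero (fun y => by positivity) key hlim

/-- Derivative of `t ↦ (max t 0) ^ q` for `q > 1`. -/
lemma hasDerivAt_posPart_rpow {q : ℝ} (hq : 1 < q) (t : ℝ) :
    HasDerivAt (fun t : ℝ => max t 0 ^ q) (q * max t 0 ^ (q - 1)) t := by
  rcases lt_trichotomy t 0 with ht | rfl | ht
  · have hev : (fun t : ℝ => max t 0 ^ q) =ᶠ[nhds t] fun _ => (0:ℝ) ^ q := by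
      filter_upwards [eventually_lt_nhds ht] with y hy
      rw [max_eq_right hy.le]
    have : HasDerivAt (fun _ : ℝ => (0:ℝ) ^ q) 0 t := hasDerivAt_const _ _
    have h2 := this.congr_of_eventuallyEq hev
    refine h2.congr_deriv (Eq.symm ?_)
    rw [max_eq_right ht.le, Real.zero_rpow (by linarith : q - 1 ≠ 0), mul_zero]
  · have h0 : HasDerivAt (fun t : ℝ => max t 0 ^ q) 0 0 := by
      apply hasDerivAt_zero_of_abs_le hq
      intro y
      simp only [max_self, sub_zero]
      rw [Real.zero_rpow (by linarith : q ≠ 0), sub_zero]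
      rw [abs_of_nonneg (Real.rpow_nonneg (le_max_right _ _) q)]
      exact Real.rpow_le_rpow (le_max_right _ _) (max_le (le_abs_self y) (abs_nonneg y)) (by linarith)
    convert h0 using 1
    rw [max_self, Real.zero_rpow (by linarith : q - 1 ≠ 0), mul_zero]
  · have hev : (fun t : ℝ => max t 0 ^ q) =ᶠ[nhds t] fun t => t ^ q := by
      filter_upwards [eventually_gt_nhds ht] with y hy
      rw [max_eq_left hy.le]
    have h1 : HasDerivAt (fun t : ℝ => t ^ q) (q * t ^ (q - 1)) t :=
      Real.hasDerivAt_rpow_const (Or.inl ht.ne')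
    have h2 := h1.congr_of_eventuallyEq hev
    refine h2.congr_deriv (Eq.symm ?_)
    rw [max_eq_left ht.le]

noncomputable def D1 (p d s : ℝ) : ℝ := max (|s| - d) 0 ^ (p - 1) * (SignType.sign s : ℝ)

noncomputable def D2 (p d s : ℝ) : ℝ := (p - 1) * max (|s| - d) 0 ^ (p - 2)

lemma hasDerivAt_G {p d : ℝ} (hp : 2 < p) (hd : 0 ≤ d) (s : ℝ) :
    HasDerivAt (fun s : ℝ => (1 / p) * max (|s| - d) 0 ^ p) (D1 p d s) s := by
  have hp0 : (0:ℝ) < p := by linarith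
  rcases eq_or_ne s 0 with rfl | hs
  · -- squeeze at 0
    have h0 : HasDerivAt (fun s : ℝ => (1 / p) * max (|s| - d) 0 ^ p) 0 0 := by
      apply hasDerivAt_zero_of_abs_le (by linarith : (1:ℝ) < p)
      intro y
      have hm0 : max (|(0:ℝ)| - d) 0 = 0 := by
        simp [max_eq_right, neg_nonpos.2 hd, hd]
      rw [hm0, Real.zero_rpow hp0.ne', mul_zero, sub_zero, sub_zero]
      have hb : max (|y| - d) 0 ≤ |y| := max_le (by linarith [abs_nonneg y]) (abs_nonneg y)
      have h1 : max (|y| - d) 0 ^ p ≤ |y| ^ p :=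
        Real.rpow_le_rpow (le_max_right _ _) hb hp0.le
      have h2 : (0:ℝ) ≤ max (|y| - d) 0 ^ p := Real.rpow_nonneg (le_max_right _ _) p
      rw [abs_of_nonneg (by positivity)]
      calc 1 / p * max (|y| - d) 0 ^ p ≤ 1 * max (|y| - d) 0 ^ p := by
            apply mul_le_mul_of_nonneg_right _ h2
            rw [div_le_one hp0]; linarith
        _ ≤ |y| ^ p := by rw [one_mul]; exact h1
    convert h0 using 1
    simp [D1]
  · have habs : HasDerivAt (fun s : ℝ => |s| - d) ((SignType.sign s : ℝ)) s :=
      (hasDerivAt_abs hs).sub_const d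
    have hmax := (hasDerivAt_posPart_rpow (by linarith : (1:ℝ) < p) (|s| - d)).comp s habs
    have := hmax.const_mul (1 / p)
    refine this.congr_deriv (Eq.symm ?_)
    unfold D1
    rw [← mul_assoc, ← mul_assoc, one_div, inv_mul_cancel₀ hp0.ne', one_mul]

lemma continuous_D2 {p d : ℝ} (hp : 2 < p) : Continuous (D2 p d) := by
  unfold D2
  apply continuous_const.mul
  rw [continuous_iff_continuousAt]
  intro s
  have hc : ContinuousAt (fun s : ℝ => max (|s| - d) 0) s :=
    ((continuous_abs.sub continuous_const).max continuous_const).continuousAt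
  exact hc.rpow_const (Or.inr (by linarith))

lemma hasDerivAt_D1 {p d : ℝ} (hp : 2 < p) (hd : 0 ≤ d) (s : ℝ) :
    HasDerivAt (D1 p d) (D2 p d s) s := by
  rcases lt_trichotomy (|s| - d) 0 with hlt | heq | hgt
  · -- locally zero
    have hev : D1 p d =ᶠ[nhds s] fun _ => (0:ℝ) := by
      have hc : ContinuousAt (fun t : ℝ => |t| - d) s :=
        (continuous_abs.sub continuous_const).continuousAt
      filter_upwards [hc.eventually_lt_const hlt] with y hy
      unfold D1
      rw [max_eq_right hy.le, Real.zero_rpow (by linarith : p - 1 ≠ 0), zero_mul]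
    have h0 : HasDerivAt (fun _ : ℝ => (0:ℝ)) 0 s := hasDerivAt_const _ _
    have h2 := h0.congr_of_eventuallyEq hev
    refine h2.congr_deriv (Eq.symm ?_)
    unfold D2
    rw [max_eq_right hlt.le, Real.zero_rpow (by linarith : p - 2 ≠ 0), mul_zero]
  · -- boundary: squeeze
    have hs_abs : |s| = d := by linarith
    have h0 : HasDerivAt (D1 p d) 0 s := by
      apply hasDerivAt_zero_of_abs_le (by linarith : (1:ℝ) < p - 1)
      intro y
      have hD1s : D1 p d s = 0 := by
        unfold D1
        rw [heq, max_self, Real.zero_rpow (by linarith : p - 1 ≠ 0), zero_mul]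
      rw [hD1s, sub_zero]
      unfold D1
      rw [abs_mul]
      have hsign : |(SignType.sign y : ℝ)| ≤ 1 := by
        rcases lt_trichotomy y 0 with h | h | h <;> simp [h]
      have hb : max (|y| - d) 0 ≤ |y - s| := by
        apply max_le _ (abs_nonneg _)
        have : |y| - |s| ≤ |y - s| := abs_sub_abs_le_abs_sub y s
        linarith [hs_abs ▸ this]
      have h1 : |max (|y| - d) 0 ^ (p - 1)| ≤ |y - s| ^ (p - 1) := by
        rw [abs_of_nonneg (Real.rpow_nonneg (le_max_right _ _) _)]
        exact Real.rpow_le_rpow (le_max_right _ _) hb (by linarith)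
      calc |max (|y| - d) 0 ^ (p-1)| * |(SignType.sign y : ℝ)|
          ≤ |y - s| ^ (p - 1) * 1 := by
            apply mul_le_mul h1 hsign (abs_nonneg _) (Real.rpow_nonneg (abs_nonneg _) _)
        _ = |y - s| ^ (p - 1) := mul_one _
    convert h0 using 1
    unfold D2
    rw [heq, max_self, Real.zero_rpow (by linarith : p - 2 ≠ 0), mul_zero]
  · -- interior: |s| > d ≥ 0 so s ≠ 0
    have hs : s ≠ 0 := by
      intro h; rw [h] at hgt; simp at hgt; linarith
    have habs : HasDerivAt (fun t : ℝ => |t| - d) ((SignType.sign s : ℝ)) s :=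
      (hasDerivAt_abs hs).sub_const d
    have hmax := (hasDerivAt_posPart_rpow (by linarith : (1:ℝ) < p - 1) (|s| - d)).comp s habs
    -- near s, sign is constant
    have hsign_ev : D1 p d =ᶠ[nhds s]
        fun t => max (|t| - d) 0 ^ (p - 1) * (SignType.sign s : ℝ) := by
      rcases hs.lt_or_gt with h | h
      · filter_upwards [eventually_lt_nhds h] with y hy
        unfold D1; rw [_root_.sign_neg hy, _root_.sign_neg h]
      · filter_upwards [eventually_gt_nhds h] with y hy
        unfold D1; rw [_root_.sign_pos hy, _root_.sign_pos h]
    have h1 := hmax.mul_const ((SignType.sign s : ℝ))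
    have h2 := h1.congr_of_eventuallyEq hsign_ev
    refine h2.congr_deriv (Eq.symm ?_)
    unfold D2
    have hsq : (SignType.sign s : ℝ) * (SignType.sign s : ℝ) = 1 := by
      rcases hs.lt_or_gt with h | h <;>
        simp [_root_.sign_neg, _root_.sign_pos, h]
    rw [show p - 1 - 1 = p - 2 from by ring, mul_assoc, hsq, mul_one]

variable {n : ℕ}

noncomputable def innerB (n : ℕ) :
    EuclideanSpace ℝ (Fin n) →L[ℝ] EuclideanSpace ℝ (Fin n) →L[ℝ] ℝ := innerSL ℝ

@[simp] lemma innerB_apply (x y : EuclideanSpace ℝ (Fin n)) :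
    innerB n x y = inner ℝ x y := rfl

noncomputable def F1 (p ε : ℝ) (δ : Fin n → ℝ) (ξ : EuclideanSpace ℝ (Fin n)) :
    EuclideanSpace ℝ (Fin n) →L[ℝ] ℝ :=
  (∑ i, D1 p (δ i) (ξ i) • EuclideanSpace.proj i)
    + (ε * (1 + ‖ξ‖ ^ 2) ^ ((p - 2) / 2)) • innerSL ℝ ξ

noncomputable def F2 (p ε : ℝ) (δ : Fin n → ℝ) (ξ : EuclideanSpace ℝ (Fin n)) :
    EuclideanSpace ℝ (Fin n) →L[ℝ] EuclideanSpace ℝ (Fin n) →L[ℝ] ℝ :=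
  ((∑ i, D2 p (δ i) (ξ i) •
      ((EuclideanSpace.proj i).smulRight (EuclideanSpace.proj i)) :
      EuclideanSpace ℝ (Fin n) →L[ℝ] EuclideanSpace ℝ (Fin n) →L[ℝ] ℝ))
    + (ε * (1 + ‖ξ‖ ^ 2) ^ ((p - 2) / 2)) • innerB n
    + (ε * (p - 2) * (1 + ‖ξ‖ ^ 2) ^ ((p - 4) / 2)) •
      ((innerSL ℝ ξ).smulRight (innerSL ℝ ξ))

lemma norm_sq_pos (ξ : EuclideanSpace ℝ (Fin n)) : (0:ℝ) < 1 + ‖ξ‖ ^ 2 := by positivity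

lemma hasFDerivAt_normterm {p c : ℝ} (hp : 2 < p) (ξ : EuclideanSpace ℝ (Fin n)) :
    HasFDerivAt (fun ξ : EuclideanSpace ℝ (Fin n) => c * (1 + ‖ξ‖ ^ 2) ^ ((p - 2) / 2))
      ((c * (p - 2) * (1 + ‖ξ‖ ^ 2) ^ ((p - 4) / 2)) • innerSL ℝ ξ) ξ := by
  have hN : HasFDerivAt (fun ξ : EuclideanSpace ℝ (Fin n) => 1 + ‖ξ‖ ^ 2)
      (2 • (innerSL ℝ ξ)) ξ :=
    (hasStrictFDerivAt_norm_sq ξ).hasFDerivAt.const_add 1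
  have hr : HasDerivAt (fun t : ℝ => t ^ ((p - 2) / 2))
      (((p - 2) / 2) * (1 + ‖ξ‖ ^ 2) ^ ((p - 2) / 2 - 1)) (1 + ‖ξ‖ ^ 2) :=
    Real.hasDerivAt_rpow_const (Or.inl (norm_sq_pos ξ).ne')
  have h1 := (hr.comp_hasFDerivAt ξ hN).const_mul c
  refine h1.congr_fderiv (Eq.symm ?_)
  ext ζ
  simp only [ContinuousLinearMap.coe_smul', Pi.smul_apply, smul_eq_mul,
    ContinuousLinearMap.smul_apply]
  rw [show (p - 2) / 2 - 1 = (p - 4) / 2 from by ring]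
  push_cast
  ring

lemma hasFDerivAt_proj (i : Fin n) (ξ : EuclideanSpace ℝ (Fin n)) :
    HasFDerivAt (fun ξ : EuclideanSpace ℝ (Fin n) => ξ i)
      (EuclideanSpace.proj i : EuclideanSpace ℝ (Fin n) →L[ℝ] ℝ) ξ :=
  (EuclideanSpace.proj i : EuclideanSpace ℝ (Fin n) →L[ℝ] ℝ).hasFDerivAt

lemma hasFDerivAt_Feps {p ε : ℝ} (hp : 2 < p) {δ : Fin n → ℝ} (hδ : ∀ i, 0 ≤ δ i)
    (ξ : EuclideanSpace ℝ (Fin n)) :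
    HasFDerivAt (Feps n p ε δ) (F1 p ε δ ξ) ξ := by
  have hp0 : (0:ℝ) < p := by linarith
  unfold Feps F1
  apply HasFDerivAt.add
  · -- sum part
    apply HasFDerivAt.fun_sum
    intro i _
    have hG := (hasDerivAt_G hp (hδ i) (ξ i)).comp_hasFDerivAt ξ (hasFDerivAt_proj i ξ)
    exact hG
  · -- norm part
    have hN : HasFDerivAt (fun ξ : EuclideanSpace ℝ (Fin n) => 1 + ‖ξ‖ ^ 2)
        (2 • (innerSL ℝ ξ)) ξ :=
      (hasStrictFDerivAt_norm_sq ξ).hasFDerivAt.const_add 1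
    have hr : HasDerivAt (fun t : ℝ => t ^ (p / 2))
        ((p / 2) * (1 + ‖ξ‖ ^ 2) ^ (p / 2 - 1)) (1 + ‖ξ‖ ^ 2) :=
      Real.hasDerivAt_rpow_const (Or.inl (norm_sq_pos ξ).ne')
    have h1 := (hr.comp_hasFDerivAt ξ hN).const_mul (ε / p)
    refine h1.congr_fderiv (Eq.symm ?_)
    ext ζ
    simp only [ContinuousLinearMap.coe_smul', Pi.smul_apply, smul_eq_mul,
      ContinuousLinearMap.smul_apply]
    rw [show p / 2 - 1 = (p - 2) / 2 from by ring]
    field_simp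
    ring

lemma hasFDerivAt_F1 {p ε : ℝ} (hp : 2 < p) {δ : Fin n → ℝ} (hδ : ∀ i, 0 ≤ δ i)
    (ξ : EuclideanSpace ℝ (Fin n)) :
    HasFDerivAt (F1 p ε δ) (F2 p ε δ ξ) ξ := by
  have hsum : HasFDerivAt
      (fun ξ : EuclideanSpace ℝ (Fin n) => ∑ i, D1 p (δ i) (ξ i) • EuclideanSpace.proj i)
      ((∑ i, D2 p (δ i) (ξ i) •
        ((EuclideanSpace.proj i).smulRight (EuclideanSpace.proj i)) :
        EuclideanSpace ℝ (Fin n) →L[ℝ] EuclideanSpace ℝ (Fin n) →L[ℝ] ℝ)) ξ := by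
    apply HasFDerivAt.fun_sum
    intro i _
    have hD := (hasDerivAt_D1 hp (hδ i) (ξ i)).comp_hasFDerivAt ξ (hasFDerivAt_proj i ξ)
    have h1 := hD.smul_const
      (EuclideanSpace.proj i : EuclideanSpace ℝ (Fin n) →L[ℝ] ℝ)
    refine h1.congr_fderiv (Eq.symm ?_)
    ext ζ ζ'
    simp only [ContinuousLinearMap.smul_apply, ContinuousLinearMap.smulRight_apply,
      smul_eq_mul]
    ring
  have hinner : HasFDerivAt
      (fun ξ : EuclideanSpace ℝ (Fin n) =>
        (ε * (1 + ‖ξ‖ ^ 2) ^ ((p - 2) / 2)) • innerSL ℝ ξ)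
      ((ε * (1 + ‖ξ‖ ^ 2) ^ ((p - 2) / 2)) • innerB n
        + (ε * (p - 2) * (1 + ‖ξ‖ ^ 2) ^ ((p - 4) / 2)) •
          ((innerSL ℝ ξ).smulRight (innerSL ℝ ξ))) ξ := by
    have hc := hasFDerivAt_normterm (c := ε) hp ξ
    have hB : HasFDerivAt (fun ξ : EuclideanSpace ℝ (Fin n) => innerB n ξ)
        (innerB n) ξ := (innerB n).hasFDerivAt
    have h1 := hc.smul hB
    refine h1.congr_fderiv (Eq.symm ?_)
    ext ζ ζ'
    simp only [ContinuousLinearMap.add_apply, ContinuousLinearMap.smul_apply,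
      ContinuousLinearMap.smulRight_apply, innerB_apply, smul_eq_mul,
      ContinuousLinearMap.coe_smul', Pi.smul_apply, innerSL_apply_apply]
    ring
  have h := hsum.add hinner
  unfold F1 F2
  refine h.congr_fderiv (Eq.symm ?_)
  abel

lemma continuous_scal {p c q : ℝ} :
    Continuous (fun ξ : EuclideanSpace ℝ (Fin n) => c * (1 + ‖ξ‖ ^ 2) ^ q) := by
  apply continuous_const.mul
  rw [continuous_iff_continuousAt]
  intro ξ
  exact (continuous_const.add (continuous_norm.pow 2)).continuousAt.rpow_const
    (Or.inl (norm_sq_pos ξ).ne')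

lemma continuous_F2 {p ε : ℝ} (hp : 2 < p) (δ : Fin n → ℝ) :
    Continuous (F2 (n := n) p ε δ) := by
  unfold F2
  have : ContinuousAdd (EuclideanSpace ℝ (Fin n) →L[ℝ] EuclideanSpace ℝ (Fin n) →L[ℝ] ℝ) :=
    @IsTopologicalAddGroup.toContinuousAdd _ _ ContinuousLinearMap.addCommGroup.toAddGroup
      ContinuousLinearMap.topologicalAddGroup
  apply Continuous.fun_add
  apply Continuous.fun_add
  · apply continuous_finset_sum
    intro i _
    exact (((continuous_D2 hp).comp
      (EuclideanSpace.proj i : EuclideanSpace ℝ (Fin n) →L[ℝ] ℝ).continuous)).smul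
      continuous_const
  · exact (continuous_scal (p := p)).smul continuous_const
  · apply Continuous.smul (continuous_scal (p := p))
    have hinner : Continuous fun ξ : EuclideanSpace ℝ (Fin n) => innerSL ℝ ξ :=
      (innerB n).continuous
    have h1 : Continuous fun ξ : EuclideanSpace ℝ (Fin n) =>
        (ContinuousLinearMap.smulRightL ℝ (EuclideanSpace ℝ (Fin n))
          (EuclideanSpace ℝ (Fin n) →L[ℝ] ℝ)) (innerSL ℝ ξ) :=
      (ContinuousLinearMap.smulRightL ℝ _ _).continuous.comp hinner
    exact h1.clm_apply hinner


/-- Let `n ≥ 1`, `p > 2`, `δ₁, …, δ_n ≥ 0` and `ε ∈ (0, 1)`. Then `F_ε` is twice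
continuously differentiable on `ℝⁿ`, and for every `ξ, ζ ∈ ℝⁿ` the second derivative
bilinear form of `F_ε` at `ξ` evaluated at `(ζ, ζ)` equals
`(p−1)·∑ᵢ (|ξᵢ| − δᵢ)₊^{p−2}·ζᵢ² + ε·(1 + |ξ|²)^{(p−2)/2}·|ζ|²
  + ε·(p−2)·(1 + |ξ|²)^{(p−4)/2}·⟨ξ, ζ⟩²`. -/
theorem stmt4 (n : ℕ) (hn : 1 ≤ n) (p : ℝ) (hp : 2 < p) (δ : Fin n → ℝ)
    (hδ : ∀ i, 0 ≤ δ i) (ε : ℝ) (hε : ε ∈ Set.Ioo (0:ℝ) 1) :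
    ContDiff ℝ 2 (Feps n p ε δ) ∧
      ∀ ξ ζ : EuclideanSpace ℝ (Fin n),
        iteratedFDeriv ℝ 2 (Feps n p ε δ) ξ ![ζ, ζ] =
          (p - 1) * ∑ i, (max (|ξ i| - δ i) 0) ^ (p - 2) * ζ i ^ 2
            + ε * (1 + ‖ξ‖ ^ 2) ^ ((p - 2) / 2) * ‖ζ‖ ^ 2
            + ε * (p - 2) * (1 + ‖ξ‖ ^ 2) ^ ((p - 4) / 2) * (inner ℝ ξ ζ : ℝ) ^ 2 := by
  have hdiff : Differentiable ℝ (Feps n p ε δ) :=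
    fun ξ => (hasFDerivAt_Feps hp hδ ξ).differentiableAt
  have hfd : fderiv ℝ (Feps n p ε δ) = F1 p ε δ :=
    funext fun ξ => (hasFDerivAt_Feps hp hδ ξ).fderiv
  have hdiff1 : Differentiable ℝ (F1 (n := n) p ε δ) :=
    fun ξ => (hasFDerivAt_F1 hp hδ ξ).differentiableAt
  have hfd1 : fderiv ℝ (F1 (n := n) p ε δ) = F2 p ε δ :=
    funext fun ξ => (hasFDerivAt_F1 hp hδ ξ).fderiv
  constructor
  · rw [show (2 : WithTop ℕ∞) = 1 + 1 from rfl, contDiff_succ_iff_fderiv]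
    refine ⟨hdiff, by simp, ?_⟩
    rw [hfd, contDiff_one_iff_fderiv]
    exact ⟨hdiff1, by rw [hfd1]; exact continuous_F2 hp δ⟩
  · intro ξ ζ
    rw [iteratedFDeriv_two_apply, hfd, hfd1]
    show F2 p ε δ ξ ζ ζ = _
    unfold F2
    simp only [ContinuousLinearMap.add_apply, ContinuousLinearMap.smul_apply,
      ContinuousLinearMap.sum_apply, ContinuousLinearMap.smulRight_apply,
      ContinuousLinearMap.coe_sum', Finset.sum_apply, smul_eq_mul,
      innerB_apply, innerSL_apply_apply]
    have hsum : ∑ i, D2 p (δ i) (ξ i) * ((EuclideanSpace.proj i) ζ *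
        (EuclideanSpace.proj i) ζ)
        = (p - 1) * ∑ i, (max (|ξ i| - δ i) 0) ^ (p - 2) * ζ i ^ 2 := by
      rw [Finset.mul_sum]
      apply Finset.sum_congr rfl
      intro i _
      show D2 p (δ i) (ξ i) * (ζ i * ζ i) = _
      unfold D2
      ring
    rw [hsum, real_inner_self_eq_norm_sq, ← sq (inner ℝ ξ ζ : ℝ)]
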